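/- Let u, v ∈ ℝ. Then 1 + e^{−iu} + e^{iv} = 0 if and only if there exist integers p, q such that either (u = 2π/3 + 2πp and v = 2π/3 + 2πq) or (u = −2π/3 + 2πp and v = −2π/3 + 2πq). -/

import Mathlib

noncomputable section

lemma cos_tpt : Real.cos (2 * Real.pi / 3) = -(1/2) := by
  have h : 2 * Real.pi / 3 = Real.pi - Real.pi / 3 := by ring
  rw [h, Real.cos_pi_sub, Real.cos_pi_div_three]

lemma sin_tpt : Real.sin (2 * Real.pi / 3) = Real.sqrt 3 / 2 := by
  have h : 2 * Real.pi / 3 = Real.pi - Real.pi / 3 := by ring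
  rw [h, Real.sin_pi_sub, Real.sin_pi_div_three]

lemma sin_tpt_pos : 0 < Real.sin (2 * Real.pi / 3) := by
  rw [sin_tpt]
  positivity

/-- Dirac points of graphene: for u, v ∈ ℝ,
1 + e^{−iu} + e^{iv} = 0 iff (u, v) ≡ (2π/3, 2π/3) or (−2π/3, −2π/3) modulo 2π. -/
theorem statement18 (u v : ℝ) :
    1 + Complex.exp (-(Complex.I * (u : ℂ))) + Complex.exp (Complex.I * (v : ℂ)) = 0 ↔
      ∃ p q : ℤ,
        (u = 2 * Real.pi / 3 + 2 * Real.pi * p ∧ v = 2 * Real.pi / 3 + 2 * Real.pi * q) ∨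
        (u = -(2 * Real.pi / 3) + 2 * Real.pi * p ∧
          v = -(2 * Real.pi / 3) + 2 * Real.pi * q) := by
  have key : 1 + Complex.exp (-(Complex.I * (u : ℂ))) + Complex.exp (Complex.I * (v : ℂ)) =
      ((1 + Real.cos u + Real.cos v : ℝ) : ℂ) + ((Real.sin v - Real.sin u : ℝ) : ℂ) * Complex.I := by
    have h1 : -(Complex.I * (u : ℂ)) = ((-u : ℝ) : ℂ) * Complex.I := by push_cast; ring
    have h2 : Complex.I * (v : ℂ) = ((v : ℝ) : ℂ) * Complex.I := by ring
    rw [h1, h2, Complex.exp_mul_I, Complex.exp_mul_I, ← Complex.ofReal_cos, ← Complex.ofReal_sin,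
      ← Complex.ofReal_cos, ← Complex.ofReal_sin, Real.cos_neg, Real.sin_neg]
    push_cast
    ring
  rw [key]
  have hre : (((1 + Real.cos u + Real.cos v : ℝ) : ℂ)
      + ((Real.sin v - Real.sin u : ℝ) : ℂ) * Complex.I = 0) ↔
      (1 + Real.cos u + Real.cos v = 0 ∧ Real.sin v - Real.sin u = 0) := by
    constructor
    · intro h
      constructor
      · have := congrArg Complex.re h
        simpa [Complex.cos_ofReal_re] using this
      · have := congrArg Complex.im h
        simpa [Complex.sin_ofReal_re] using this
    · rintro ⟨h1, h2⟩
      rw [h1, h2]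
      simp
  rw [hre]
  constructor
  · rintro ⟨h1, h2⟩
    -- sin u = sin v
    have hs : Real.sin u = Real.sin v := by linarith
    -- cos u = cos v
    have hpu := Real.sin_sq_add_cos_sq u
    have hpv := Real.sin_sq_add_cos_sq v
    have hsq : Real.cos u ^ 2 = Real.cos v ^ 2 := by
      linear_combination hpu - hpv - (Real.sin u + Real.sin v) * hs
    have hcc : Real.cos u = Real.cos v := by
      linear_combination (Real.cos u - Real.cos v) * h1 - hsq
    have hcu : Real.cos u = Real.cos (2 * Real.pi / 3) := by
      rw [cos_tpt]; linarith
    have hcv : Real.cos v = Real.cos (2 * Real.pi / 3) := by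
      rw [cos_tpt]; linarith
    obtain ⟨k, hk⟩ := Real.cos_eq_cos_iff.mp hcu.symm
    obtain ⟨m, hm⟩ := Real.cos_eq_cos_iff.mp hcv.symm
    rcases hk with hk | hk <;> rcases hm with hm | hm
    · exact ⟨k, m, Or.inl ⟨by rw [hk]; ring, by rw [hm]; ring⟩⟩
    · -- u = 2kπ + a, v = 2mπ - a : sin u = sin a > 0, sin v = -sin a < 0, contradiction
      exfalso
      have h1 : Real.sin u = Real.sin (2 * Real.pi / 3) := by
        rw [hk, show 2 * (k:ℝ) * Real.pi + 2 * Real.pi / 3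
          = 2 * Real.pi / 3 + k * (2 * Real.pi) by ring, Real.sin_add_int_mul_two_pi]
      have h2 : Real.sin v = -Real.sin (2 * Real.pi / 3) := by
        rw [hm, show 2 * (m:ℝ) * Real.pi - 2 * Real.pi / 3
          = -(2 * Real.pi / 3) + m * (2 * Real.pi) by ring, Real.sin_add_int_mul_two_pi,
          Real.sin_neg]
      have := sin_tpt_pos
      rw [h1, h2] at hs
      linarith
    · exfalso
      have h1 : Real.sin u = -Real.sin (2 * Real.pi / 3) := by
        rw [hk, show 2 * (k:ℝ) * Real.pi - 2 * Real.pi / 3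
          = -(2 * Real.pi / 3) + k * (2 * Real.pi) by ring, Real.sin_add_int_mul_two_pi,
          Real.sin_neg]
      have h2 : Real.sin v = Real.sin (2 * Real.pi / 3) := by
        rw [hm, show 2 * (m:ℝ) * Real.pi + 2 * Real.pi / 3
          = 2 * Real.pi / 3 + m * (2 * Real.pi) by ring, Real.sin_add_int_mul_two_pi]
      have := sin_tpt_pos
      rw [h1, h2] at hs
      linarith
    · exact ⟨k, m, Or.inr ⟨by rw [hk]; ring, by rw [hm]; ring⟩⟩
  · rintro ⟨p, q, ⟨hu, hv⟩ | ⟨hu, hv⟩⟩ <;>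
    · subst hu hv
      have cu := Real.cos_add_int_mul_two_pi
      have su := Real.sin_add_int_mul_two_pi
      constructor
      · simp only [show ∀ (a : ℝ) (n : ℤ), a + 2 * Real.pi * n = a + n * (2 * Real.pi) from
          fun a n => by ring, Real.cos_add_int_mul_two_pi, Real.cos_neg, cos_tpt]
        ring
      · simp only [show ∀ (a : ℝ) (n : ℤ), a + 2 * Real.pi * n = a + n * (2 * Real.pi) from
          fun a n => by ring, Real.sin_add_int_mul_two_pi, Real.sin_neg]
        ring
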